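/- Let a be a natural number with a ≥ 2, and let Y be a random variable with the Erlang (Gamma) distribution of shape a and rate 1, so that Y has mean a. Then for every natural number k ≥ 1, E[(Y − a)^k] ≤ k! · Σ_{j=1}^{k} (sqrt(a))^j. -/

import Mathlib

open MeasureTheory ProbabilityTheory Real Finset

namespace ErlangAux

open Set
open scoped ENNReal NNReal


/-- rising factorial -/
noncomputable def m (A : ℝ) : ℕ → ℝ
  | 0 => 1
  | n+1 => m A n * (A + n)

/-- central moment algebraic formula -/
noncomputable def mu (A : ℝ) (k : ℕ) : ℝ :=
  ∑ i ∈ range (k+1), m A i * (-A)^(k-i) * (k.choose i : ℝ)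

noncomputable def S (A : ℝ) (k : ℕ) : ℝ :=
  ∑ i ∈ range (k+1), (i : ℝ) * (m A i * (-A)^(k-i) * (k.choose i : ℝ))

lemma lemC (A : ℝ) (k : ℕ) :
    ∑ j ∈ range (k+1), m A (j+1) * (-A)^(k-j) * (k.choose j : ℝ)
      = A * mu A k + S A k := by
  have : ∀ j ∈ range (k+1), m A (j+1) * (-A)^(k-j) * (k.choose j : ℝ)
      = A * (m A j * (-A)^(k-j) * (k.choose j : ℝ))
        + (j:ℝ) * (m A j * (-A)^(k-j) * (k.choose j : ℝ)) := by
    intro j _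
    simp only [m]
    ring
  rw [Finset.sum_congr rfl this, Finset.sum_add_distrib, ← Finset.mul_sum, mu, S]

lemma lemA (A : ℝ) (k : ℕ) : mu A (k+1) = S A k := by
  have h1 : mu A (k+1)
      = (∑ j ∈ range (k+1), m A (j+1) * (-A)^(k-j) * (k.choose j : ℝ))
        + ((∑ j ∈ range (k+1), m A (j+1) * (-A)^(k-j) * (k.choose (j+1) : ℝ))
            + m A 0 * (-A)^(k+1) * (k.choose 0 : ℝ)) := by
    rw [mu, Finset.sum_range_succ']
    have hsplit : ∀ x ∈ range (k+1), m A (x+1) * (-A)^(k+1-(x+1)) * (((k+1).choose (x+1) : ℝ))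
        = m A (x+1)*(-A)^(k-x)*(k.choose x : ℝ) + m A (x+1)*(-A)^(k-x)*(k.choose (x+1) : ℝ) := by
      intro x _
      rw [Nat.succ_sub_succ, Nat.choose_succ_succ]
      push_cast
      ring
    rw [Finset.sum_congr rfl hsplit, Finset.sum_add_distrib]
    simp only [Nat.sub_zero, Nat.choose_zero_right, Nat.cast_one]
    ring
  have h2 : (∑ j ∈ range (k+1), m A (j+1) * (-A)^(k-j) * (k.choose (j+1) : ℝ))
        + m A 0 * (-A)^(k+1) * (k.choose 0 : ℝ) = -A * mu A k := by
    have : (∑ j ∈ range (k+1), m A (j+1) * (-A)^(k+1-(j+1)) * (k.choose (j+1) : ℝ))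
        + m A 0 * (-A)^(k+1-0) * (k.choose 0 : ℝ)
        = ∑ i ∈ range (k+2), m A i * (-A)^(k+1-i) * (k.choose i : ℝ) :=
      (Finset.sum_range_succ' (fun i => m A i * (-A)^(k+1-i) * (k.choose i : ℝ)) (k+1)).symm
    simp only [Nat.succ_sub_succ, Nat.sub_zero] at this
    rw [this, Finset.sum_range_succ, Nat.choose_succ_self, Nat.cast_zero, mul_zero, add_zero,
      mu, Finset.mul_sum]
    apply Finset.sum_congr rfl
    intro i hi
    have hik : i ≤ k := Nat.lt_succ_iff.mp (Finset.mem_range.mp hi)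
    have : k + 1 - i = (k - i) + 1 := by omega
    rw [this, pow_succ]
    ring
  rw [h1, h2, lemC]
  ring

lemma lemB (A : ℝ) (k : ℕ) : S A (k+1) = (k+1 : ℝ) * (A * mu A k + S A k) := by
  rw [S, Finset.sum_range_succ']
  simp only [Nat.cast_zero, zero_mul, add_zero, Nat.succ_sub_succ]
  rw [← lemC, Finset.mul_sum]
  apply Finset.sum_congr rfl
  intro j hj
  have h : (k+1) * k.choose j = (k+1).choose (j+1) * (j+1) := Nat.add_one_mul_choose_eq k j
  have hc : ((j:ℝ)+1) * ((k+1).choose (j+1) : ℝ) = ((k:ℝ)+1) * (k.choose j : ℝ) := by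
    have h2 : (((k+1) * k.choose j : ℕ) : ℝ) = (((k+1).choose (j+1) * (j+1) : ℕ) : ℝ) := by
      exact_mod_cast congrArg (Nat.cast (R := ℝ)) h
    push_cast at h2
    linarith
  push_cast
  linear_combination (m A (j+1) * (-A)^(k-j)) * hc

lemma mu_rec (A : ℝ) (k : ℕ) :
    mu A (k+2) = (k+1 : ℝ) * (A * mu A k + mu A (k+1)) := by
  rw [lemA, lemB, ← lemA]

lemma mu_zero (A : ℝ) : mu A 0 = 1 := by simp [mu, m]

lemma mu_one (A : ℝ) : mu A 1 = 0 := by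
  simp [mu, Finset.sum_range_succ, m]


lemma mu_bound (f : ℕ → ℝ) (A : ℝ) (hA : 0 ≤ A)
    (mu_one : f 1 = 0)
    (mu_rec : ∀ k : ℕ, f (k+2) = (k+1 : ℝ) * (A * f k + f (k+1)))
    (mu_zero : f 0 = 1) :
    ∀ k : ℕ, f (k+1) ≤ (k+1).factorial * ∑ j ∈ Finset.Icc 1 (k+1), Real.sqrt A ^ j := by
  set s := Real.sqrt A with hs_def
  have hs : 0 ≤ s := Real.sqrt_nonneg A
  have hs2 : s^2 = A := Real.sq_sqrt hA
  set SG : ℕ → ℝ := fun n => ∑ j ∈ Finset.Icc 1 n, s ^ j with hSG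
  have hSGnonneg : ∀ n, 0 ≤ SG n := fun n =>
    Finset.sum_nonneg fun j _ => pow_nonneg hs j
  have hSGmono : ∀ {n n' : ℕ}, n ≤ n' → SG n ≤ SG n' := by
    intro n n' h
    exact Finset.sum_le_sum_of_subset_of_nonneg (Finset.Icc_subset_Icc le_rfl h)
      (fun j _ _ => pow_nonneg hs j)
  have hshift : ∀ n, A * SG n ≤ SG (n+2) := by
    intro n
    have h1 : A * SG n = ∑ j ∈ Finset.Icc 1 n, s ^ (j+2) := by
      rw [hSG, Finset.mul_sum]
      apply Finset.sum_congr rfl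
      intro j _
      rw [pow_add, ← hs2]
      ring
    have h2 : ∑ j ∈ Finset.Icc 1 n, s ^ (j+2) = ∑ j ∈ Finset.Icc 3 (n+2), s ^ j := by
      rw [← Finset.map_add_right_Icc 1 n 2, Finset.sum_map]
      rfl
    rw [h1, h2]
    exact Finset.sum_le_sum_of_subset_of_nonneg
      (Finset.Icc_subset_Icc (by norm_num) le_rfl) (fun j _ _ => pow_nonneg hs j)
  suffices h : ∀ k : ℕ,
      (f (k+1) ≤ (k+1).factorial * SG (k+1)) ∧
      (f (k+2) ≤ (k+2).factorial * SG (k+2)) by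
    intro k; exact (h k).1
  intro k
  induction k with
  | zero =>
    constructor
    · rw [mu_one]
      have h1 := hSGnonneg 1
      positivity
    · have h2 : f 2 = A := by
        have := mu_rec 0
        rw [mu_zero, mu_one] at this
        simpa using this
      have hSG2 : SG 2 = s + s^2 := by
        show ∑ j ∈ Finset.Icc 1 2, s ^ j = s + s^2
        rw [show Finset.Icc 1 2 = {1, 2} by rfl]
        rw [Finset.sum_insert (by decide), Finset.sum_singleton]
        ring
      rw [h2, hSG2, hs2]
      norm_num
      nlinarith
  | succ k ih =>
    refine ⟨ih.2, ?_⟩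
    have hrec := mu_rec (k+1)
    have IH1 := ih.1
    have IH2 := ih.2
    have hF1 : (0:ℝ) ≤ ((k+1).factorial : ℝ) := by positivity
    have hF2 : (0:ℝ) ≤ ((k+2).factorial : ℝ) := by positivity
    have hA1 : A * f (k+1) ≤ ((k+1).factorial : ℝ) * SG (k+3) := by
      calc A * f (k+1) ≤ A * (((k+1).factorial : ℝ) * SG (k+1)) :=
            mul_le_mul_of_nonneg_left IH1 hA
        _ = ((k+1).factorial : ℝ) * (A * SG (k+1)) := by ring
        _ ≤ ((k+1).factorial : ℝ) * SG (k+3) :=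
            mul_le_mul_of_nonneg_left (hshift (k+1)) hF1
    have hB : f (k+2) ≤ ((k+2).factorial : ℝ) * SG (k+3) :=
      le_trans IH2 (mul_le_mul_of_nonneg_left (hSGmono (by omega)) hF2)
    have hfact : ((k:ℝ)+2) * (((k+1).factorial : ℝ) + ((k+2).factorial : ℝ))
        = ((k+3).factorial : ℝ) := by
      simp only [show k+3 = (k+2)+1 by omega, show k+2 = (k+1)+1 by omega, Nat.factorial_succ]
      push_cast
      ring
    have hk2 : (0:ℝ) ≤ (k:ℝ)+2 := by positivity
    calc f (k+1+2) = ((k:ℝ)+2) * (A * f (k+1) + f (k+2)) := by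
          rw [hrec]; push_cast; ring
      _ ≤ ((k:ℝ)+2) * (((k+1).factorial : ℝ) * SG (k+3) + ((k+2).factorial : ℝ) * SG (k+3)) :=
          mul_le_mul_of_nonneg_left (add_le_add hA1 hB) hk2
      _ = ((k:ℝ)+2) * (((k+1).factorial : ℝ) + ((k+2).factorial : ℝ)) * SG (k+3) := by ring
      _ = ((k+3).factorial : ℝ) * SG (k+3) := by rw [hfact]
      _ = ((k+1+2).factorial : ℝ) * SG (k+1+2) := by norm_num

lemma gamma_m (A : ℝ) (hA : 0 < A) : ∀ n : ℕ, Real.Gamma (A + n) = m A n * Real.Gamma A := by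
  intro n
  induction n with
  | zero => simp [m]
  | succ n ih =>
    have h1 : A + (n+1 : ℕ) = (A + n) + 1 := by push_cast; ring
    rw [h1, Real.Gamma_add_one (by positivity), ih, m]
    ring

lemma hint (A : ℝ) (hA : 0 < A) (n : ℕ) :
    IntegrableOn (fun x : ℝ => x ^ (A + n - 1) * Real.exp (-x)) (Ioi 0) volume := by
  have h := Real.GammaIntegral_convergent (show (0:ℝ) < A + n by positivity)
  exact h.congr_fun (fun x _ => mul_comm _ _) measurableSet_Ioi

lemma hval (A : ℝ) (hA : 0 < A) (n : ℕ) :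
    ∫ x in Ioi (0:ℝ), x ^ (A + n - 1) * Real.exp (-x) = Real.Gamma (A + n) := by
  have h := integral_rpow_mul_exp_neg_mul_Ioi (show (0:ℝ) < A + n by positivity) one_pos
  simpa using h

lemma integral_pdf_mul (A : ℝ) (hA : 1 < A) (k : ℕ) :
    ∫ x, gammaPDFReal A 1 x * (x - A)^k = mu A k := by
  have hA0 : 0 < A := lt_trans one_pos hA
  have hΓ : 0 < Real.Gamma A := Real.Gamma_pos_of_pos hA0
  have hzero : ∀ x : ℝ, x ≤ 0 → gammaPDFReal A 1 x * (x - A)^k = 0 := by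
    intro x hx
    rcases lt_or_eq_of_le hx with hx' | hx'
    · rw [gammaPDFReal, if_neg (not_le.mpr hx'), zero_mul]
    · rw [hx']
      simp [gammaPDFReal, Real.zero_rpow (show A - 1 ≠ 0 by linarith)]
  have hind : (fun x => gammaPDFReal A 1 x * (x - A)^k)
      = (Ioi (0:ℝ)).indicator (fun x => gammaPDFReal A 1 x * (x - A)^k) := by
    funext x
    rw [Set.indicator_apply]
    by_cases hx : x ∈ Set.Ioi (0:ℝ)
    · rw [if_pos hx]
    · rw [if_neg hx]
      exact hzero x (by simpa using hx)
  rw [hind, MeasureTheory.integral_indicator measurableSet_Ioi]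
  have hpt : Set.EqOn (fun x => gammaPDFReal A 1 x * (x - A)^k)
      (fun x => ∑ i ∈ range (k+1),
        ((k.choose i : ℝ) * (-A)^(k-i) / Real.Gamma A) * (x ^ (A + i - 1) * Real.exp (-x)))
      (Ioi (0:ℝ)) := by
    intro x hx
    have hx0 : (0:ℝ) < x := hx
    simp only
    rw [gammaPDFReal, if_pos hx0.le, sub_eq_add_neg x A, add_pow, Finset.mul_sum]
    apply Finset.sum_congr rfl
    intro i _
    have hxp : x ^ (A - 1) * x ^ i = x ^ (A + i - 1) := by
      rw [← Real.rpow_natCast x i, ← Real.rpow_add hx0]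
      ring_nf
    rw [Real.one_rpow]
    simp only [one_mul]
    rw [← hxp]
    ring
  rw [MeasureTheory.setIntegral_congr_fun measurableSet_Ioi hpt]
  rw [MeasureTheory.integral_finset_sum _ (fun i _ => ((hint A hA0 i).const_mul _))]
  rw [mu]
  apply Finset.sum_congr rfl
  intro i _
  rw [MeasureTheory.integral_const_mul, hval A hA0 i, gamma_m A hA0 i]
  field_simp



lemma integral_gammaMeasure (A : ℝ) (hA : 1 < A) (k : ℕ) :
    ∫ x, (x - A)^k ∂(gammaMeasure A 1) = mu A k := by
  have hA0 : 0 < A := lt_trans one_pos hA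
  rw [gammaMeasure,
    show gammaPDF A 1 = (fun x => ((gammaPDFReal A 1 x).toNNReal : ℝ≥0∞)) from rfl,
    integral_withDensity_eq_integral_smul (measurable_gammaPDFReal A 1).real_toNNReal]
  rw [← integral_pdf_mul A hA k]
  apply integral_congr_ae
  filter_upwards with x
  rw [NNReal.smul_def, Real.coe_toNNReal _ (gammaPDFReal_nonneg hA0 one_pos x), smul_eq_mul]


end ErlangAux

/-- central moment bound for an Erlang(a, 1) random variable
(normalized form of Lemma A.1 of the paper). -/
theorem erlang_central_moment_bound_rate_one
    {Ω : Type*} [MeasurableSpace Ω] (P : Measure Ω) [IsProbabilityMeasure P]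
    (a : ℕ) (ha : 2 ≤ a)
    (Y : Ω → ℝ) (hY : Measure.map Y P = gammaMeasure a 1) :
    ∀ k : ℕ, 1 ≤ k →
      ∫ ω, (Y ω - a) ^ k ∂P
        ≤ k.factorial * ∑ j ∈ Finset.Icc 1 k, Real.sqrt a ^ j := by
  intro k hk
  obtain ⟨k', rfl⟩ : ∃ k', k = k' + 1 := ⟨k - 1, by omega⟩
  set A : ℝ := (a : ℝ) with hAdef
  have hA1 : 1 < A := by
    rw [hAdef]
    exact_mod_cast lt_of_lt_of_le one_lt_two (by exact_mod_cast ha)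
  have hA0 : 0 < A := lt_trans one_pos hA1
  have hmeasY : AEMeasurable Y P := by
    by_contra h
    rw [Measure.map_of_not_aemeasurable h] at hY
    have hprob : IsProbabilityMeasure (gammaMeasure A 1) :=
      isProbabilityMeasure_gammaMeasure hA0 one_pos
    have h1 := hprob.measure_univ
    rw [← hY] at h1
    simp at h1
  have hcont : Continuous fun x : ℝ => (x - A) ^ (k' + 1) :=
    (continuous_id.sub continuous_const).pow _
  have hInt : ∫ ω, (Y ω - A) ^ (k' + 1) ∂P
      = ∫ x, (x - A) ^ (k' + 1) ∂(gammaMeasure A 1) := by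
    rw [← hY]
    exact (integral_map hmeasY hcont.aestronglyMeasurable).symm
  rw [hInt, ErlangAux.integral_gammaMeasure A hA1]
  exact ErlangAux.mu_bound (ErlangAux.mu A) A hA0.le (ErlangAux.mu_one A)
    (ErlangAux.mu_rec A) (ErlangAux.mu_zero A) k'
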